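/- Let d ≥ 1, let Ω ⊆ ℝ^d be a nonempty bounded open set, let ε > 0 and k > 0, and let u, w ∈ V. If the modified Crank–Nicolson equation tested with u − w holds, i.e. (1/k)∫_Ω (u − w)² dx + ∫_Ω ⟨(∇u + ∇w)/2, ∇(u − w)⟩ dx + (1/ε²)∫_Ω F̃[u(x), w(x)](u(x) − w(x)) dx = 0, then J_ε(u) + (1/k)∫_Ω (u − w)² dx = J_ε(w). -/

import Mathlib

open MeasureTheory Set RealInnerProductSpace

/-- The secant slope `F̃[a,b]` of the double-well potential `F(u) = ¼(u²−1)²`. -/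
noncomputable def Ftilde (a b : ℝ) : ℝ :=
  if a = b then a ^ 3 - a
  else (1 / 4 * (a ^ 2 - 1) ^ 2 - 1 / 4 * (b ^ 2 - 1) ^ 2) / (a - b)

lemma Ftilde_mul (a b : ℝ) :
    Ftilde a b * (a - b) = 1 / 4 * (a ^ 2 - 1) ^ 2 - 1 / 4 * (b ^ 2 - 1) ^ 2 := by
  unfold Ftilde
  by_cases h : a = b
  · simp [h]
  · rw [if_neg h, div_mul_cancel₀]
    exact sub_ne_zero.mpr h

/-- Lemma 4.2: the modified Crank–Nicolson scheme for the Allen–Cahn equation is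
unconditionally energy stable, with the exact discrete energy identity. -/
theorem stmt_14 (d : ℕ) (hd : 1 ≤ d)
    (Ω : Set (EuclideanSpace ℝ (Fin d))) (hΩne : Ω.Nonempty)
    (hΩbd : Bornology.IsBounded Ω) (hΩop : IsOpen Ω)
    (ε k : ℝ) (hε : 0 < ε) (hk0 : 0 < k)
    (J : (EuclideanSpace ℝ (Fin d) → ℝ) → ℝ)
    (hJ : ∀ v, J v = ∫ x in Ω,
      (1 / 2 * ‖gradient v x‖ ^ 2 + 1 / ε ^ 2 * (1 / 4 * ((v x) ^ 2 - 1) ^ 2)))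
    (u w : EuclideanSpace ℝ (Fin d) → ℝ)
    (hu : ContDiff ℝ 1 u) (hw : ContDiff ℝ 1 w)
    (hscheme : 1 / k * (∫ x in Ω, (u x - w x) ^ 2)
      + (∫ x in Ω, ⟪(1 / 2 : ℝ) • (gradient u x + gradient w x),
          gradient (fun y => u y - w y) x⟫)
      + 1 / ε ^ 2 * (∫ x in Ω, Ftilde (u x) (w x) * (u x - w x)) = 0) :
    J u + 1 / k * (∫ x in Ω, (u x - w x) ^ 2) = J w := by
  have hKc : IsCompact (closure Ω) := hΩbd.isCompact_closure
  -- integrability of continuous functions on Ω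
  have hint : ∀ g : EuclideanSpace ℝ (Fin d) → ℝ, Continuous g →
      IntegrableOn g Ω volume := fun g hg =>
    (hg.continuousOn.integrableOn_compact hKc).mono_set subset_closure
  -- continuity of gradients
  have hgc : ∀ v : EuclideanSpace ℝ (Fin d) → ℝ, ContDiff ℝ 1 v →
      Continuous (fun x => gradient v x) := by
    intro v hv
    have : Continuous (fun x => fderiv ℝ v x) := hv.continuous_fderiv one_ne_zero
    exact (InnerProductSpace.toDual ℝ _).symm.continuous.comp this
  have hgu := hgc u hu
  have hgw := hgc w hw
  -- gradient of difference
  have hdiff : ∀ x, gradient (fun y => u y - w y) x = gradient u x - gradient w x := by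
    intro x
    have h1 : HasFDerivAt u (fderiv ℝ u x) x :=
      (hu.differentiable one_ne_zero x).hasFDerivAt
    have h2 : HasFDerivAt w (fderiv ℝ w x) x :=
      (hw.differentiable one_ne_zero x).hasFDerivAt
    have : fderiv ℝ (fun y => u y - w y) x = fderiv ℝ u x - fderiv ℝ w x := (h1.sub h2).fderiv
    simp only [gradient, this, map_sub]
  -- pointwise inner product identity
  have hip : ∀ x, ⟪(1 / 2 : ℝ) • (gradient u x + gradient w x),
      gradient (fun y => u y - w y) x⟫
      = 1 / 2 * ‖gradient u x‖ ^ 2 - 1 / 2 * ‖gradient w x‖ ^ 2 := by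
    intro x
    rw [hdiff x, real_inner_smul_left, inner_add_left, inner_sub_right,
      inner_sub_right, real_inner_self_eq_norm_sq, real_inner_self_eq_norm_sq,
      real_inner_comm (gradient w x)]
    ring
  -- integrability pieces
  have i1 : IntegrableOn (fun x => 1 / 2 * ‖gradient u x‖ ^ 2) Ω volume :=
    hint _ (continuous_const.mul (hgu.norm.pow 2))
  have i2 : IntegrableOn (fun x => 1 / 2 * ‖gradient w x‖ ^ 2) Ω volume :=
    hint _ (continuous_const.mul (hgw.norm.pow 2))
  have i3 : IntegrableOn (fun x => 1 / ε ^ 2 * (1 / 4 * ((u x) ^ 2 - 1) ^ 2)) Ω volume :=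
    hint _ (continuous_const.mul (continuous_const.mul
      (((hu.continuous.pow 2).sub continuous_const).pow 2)))
  have i4 : IntegrableOn (fun x => 1 / ε ^ 2 * (1 / 4 * ((w x) ^ 2 - 1) ^ 2)) Ω volume :=
    hint _ (continuous_const.mul (continuous_const.mul
      (((hw.continuous.pow 2).sub continuous_const).pow 2)))
  -- rewrite the inner product integral
  have e1 : (∫ x in Ω, ⟪(1 / 2 : ℝ) • (gradient u x + gradient w x),
      gradient (fun y => u y - w y) x⟫)
      = (∫ x in Ω, 1 / 2 * ‖gradient u x‖ ^ 2)
        - (∫ x in Ω, 1 / 2 * ‖gradient w x‖ ^ 2) := by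
    rw [← integral_sub i1 i2]
    exact integral_congr_ae (Filter.Eventually.of_forall fun x => hip x)
  -- rewrite the potential integral
  have e2 : 1 / ε ^ 2 * (∫ x in Ω, Ftilde (u x) (w x) * (u x - w x))
      = (∫ x in Ω, 1 / ε ^ 2 * (1 / 4 * ((u x) ^ 2 - 1) ^ 2))
        - (∫ x in Ω, 1 / ε ^ 2 * (1 / 4 * ((w x) ^ 2 - 1) ^ 2)) := by
    rw [← integral_sub i3 i4, ← MeasureTheory.integral_const_mul]
    refine integral_congr_ae (Filter.Eventually.of_forall fun x => ?_)
    simp only []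
    rw [Ftilde_mul]
    ring
  have hJu : J u = (∫ x in Ω, 1 / 2 * ‖gradient u x‖ ^ 2)
      + (∫ x in Ω, 1 / ε ^ 2 * (1 / 4 * ((u x) ^ 2 - 1) ^ 2)) := by
    rw [hJ u, integral_add i1 i3]
  have hJw : J w = (∫ x in Ω, 1 / 2 * ‖gradient w x‖ ^ 2)
      + (∫ x in Ω, 1 / ε ^ 2 * (1 / 4 * ((w x) ^ 2 - 1) ^ 2)) := by
    rw [hJ w, integral_add i2 i4]
  rw [e1, e2] at hscheme
  rw [hJu, hJw]
  linarith
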